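/- Let $A \in \mathbb{C}^{n\times n}$, $B \in \mathbb{C}^{n\times m}$, $C \in \mathbb{C}^{p\times n}$, $\tau > 0$. Let $\hat{A} = \hat{R}\hat{\Lambda}\hat{R}^{-1}$ with $\hat{R} \in \mathbb{C}^{r\times r}$ invertible and $\hat{\Lambda} = \mathrm{diag}(\hat{\lambda}_1,\ldots,\hat{\lambda}_r)$, let $\hat{B} \in \mathbb{C}^{r\times m}$, $\hat{C} \in \mathbb{C}^{p\times r}$, and suppose $-\hat{\lambda}_i I - A$ and $-\hat{\lambda}_i I - \hat{A}$ are invertible for every $i$. Set $B_\tau = \exp(\tau A)B$, $\hat{B}_\tau = \exp(\tau\hat{A})\hat{B}$, define $G_{\mathcal{T}}(s) = C(sI-A)^{-1}[B,\; -B_\tau]$ and $\hat{G}_{\mathcal{T}}(s) = \hat{C}(sI-\hat{A})^{-1}[\hat{B},\; -\hat{B}_\tau]$, let $\hat{r}_i^T$ be the $i$-th row of $\hat{R}^{-1}\hat{B}$, and set $\tilde{r}_i = \begin{bmatrix}\hat{r}_i \\ e^{\hat{\lambda}_i\tau}\hat{r}_i\end{bmatrix}$. Let $\bar{P}_\tau$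 satisfy $A\bar{P}_\tau + \bar{P}_\tau\hat{A}^T + B\hat{B}^T - B_\tau\hat{B}_\tau^T = 0$ and $\hat{P}_\tau$ satisfy $\hat{A}\hat{P}_\tau + \hat{P}_\tau\hat{A}^T + \hat{B}\hat{B}^T - \hat{B}_\tau\hat{B}_\tau^T = 0$. Then $C\bar{P}_\tau = \hat{C}\hat{P}_\tau$ if and only if $G_{\mathcal{T}}(-\hat{\lambda}_i)\tilde{r}_i = \hat{G}_{\mathcal{T}}(-\hat{\lambda}_i)\tilde{r}_i$ for every $i = 1,\ldots,r$. -/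

import Mathlib

open Matrix NormedSpace

private lemma col_mul {a b c : ℕ} (X : Matrix (Fin a) (Fin b) ℂ)
    (Y : Matrix (Fin b) (Fin c) ℂ) (i : Fin c) :
    (fun k => (X * Y) k i) = X *ᵥ (fun j => Y j i) := by
  funext k
  simp [Matrix.mul_apply, Matrix.mulVec, dotProduct]

private lemma tl_col {N r m : ℕ}
    (A : Matrix (Fin N) (Fin N) ℂ) (B Bt : Matrix (Fin N) (Fin m) ℂ)
    (Rhat : Matrix (Fin r) (Fin r) ℂ) (hRhat : IsUnit Rhat)
    (lamhat : Fin r → ℂ) (e : Fin r → ℂ)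
    (Ahat : Matrix (Fin r) (Fin r) ℂ)
    (hAhat : Ahat = Rhat * Matrix.diagonal lamhat * Rhat⁻¹)
    (Bhat Bhattau : Matrix (Fin r) (Fin m) ℂ)
    (hBT : Rhat⁻¹ * Bhattau = Matrix.diagonal e * (Rhat⁻¹ * Bhat))
    (P : Matrix (Fin N) (Fin r) ℂ)
    (hP : A * P + P * Ahatᵀ + B * Bhatᵀ - Bt * Bhattauᵀ = 0)
    (i : Fin r) (hi : IsUnit ((-lamhat i) • (1 : Matrix (Fin N) (Fin N) ℂ) - A)) :
    (fun k => (P * Rhat⁻¹ᵀ) k i) = ((-lamhat i) • (1 : Matrix (Fin N) (Fin N) ℂ) - A)⁻¹ *ᵥ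
      (B *ᵥ (fun j => (Rhat⁻¹ * Bhat) i j)
        + (-Bt) *ᵥ (fun j => e i * (Rhat⁻¹ * Bhat) i j)) := by
  have hRdet : IsUnit Rhat.det := (Matrix.isUnit_iff_isUnit_det Rhat).mp hRhat
  have hinv1 : Rhat⁻¹ * Rhat = 1 := Matrix.nonsing_inv_mul Rhat hRdet
  set S : Matrix (Fin r) (Fin r) ℂ := Rhat⁻¹ᵀ with hS
  set Q : Matrix (Fin N) (Fin r) ℂ := P * S with hQdef
  have hRTS : Rhatᵀ * S = 1 := by
    rw [hS, ← Matrix.transpose_mul, hinv1, Matrix.transpose_one]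
  -- transform Sylvester equation
  have h1 : A * P + P * Ahatᵀ = Bt * Bhattauᵀ - B * Bhatᵀ := by
    rw [← sub_eq_zero, ← hP]; abel
  have hAhatT : Ahatᵀ * S = S * Matrix.diagonal lamhat := by
    rw [hAhat]
    simp only [Matrix.transpose_mul, Matrix.diagonal_transpose]
    rw [Matrix.mul_assoc, Matrix.mul_assoc, hRTS, Matrix.mul_one, hS]
  have hQ : A * Q = Bt * (Bhattauᵀ * S) - B * (Bhatᵀ * S) - Q * Matrix.diagonal lamhat := by
    have h2 := congrArg (· * S) h1
    simp only [Matrix.add_mul, Matrix.sub_mul] at h2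
    rw [Matrix.mul_assoc P Ahatᵀ S, hAhatT, ← Matrix.mul_assoc P S _] at h2
    rw [hQdef, ← Matrix.mul_assoc, eq_sub_iff_add_eq, h2,
      Matrix.mul_assoc, Matrix.mul_assoc]
  -- entries of the right-hand side columns
  have hBS : (fun j => (Bhatᵀ * S) j i) = (fun j => (Rhat⁻¹ * Bhat) i j) := by
    funext j
    rw [hS, ← Matrix.transpose_mul, Matrix.transpose_apply]
  have hBTS : (fun j => (Bhattauᵀ * S) j i) = (fun j => e i * (Rhat⁻¹ * Bhat) i j) := by
    funext j
    rw [hS, ← Matrix.transpose_mul, Matrix.transpose_apply, hBT,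
      Matrix.diagonal_mul]
  have hdiagcol : (fun k => (Q * Matrix.diagonal lamhat) k i) = lamhat i • (fun k => Q k i) := by
    funext k
    simp [Matrix.mul_diagonal, mul_comm]
  set M : Matrix (Fin N) (Fin N) ℂ := (-lamhat i) • (1 : Matrix (Fin N) (Fin N) ℂ) - A with hM
  have hcol : M *ᵥ (fun k => Q k i)
      = B *ᵥ (fun j => (Rhat⁻¹ * Bhat) i j)
        + (-Bt) *ᵥ (fun j => e i * (Rhat⁻¹ * Bhat) i j) := by
    have hAc : A *ᵥ (fun k => Q k i)
        = Bt *ᵥ (fun j => e i * (Rhat⁻¹ * Bhat) i j)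
          - B *ᵥ (fun j => (Rhat⁻¹ * Bhat) i j) - lamhat i • (fun k => Q k i) := by
      rw [← col_mul A Q i, hQ]
      have hsplit : (fun k => (Bt * (Bhattauᵀ * S) - B * (Bhatᵀ * S)
            - Q * Matrix.diagonal lamhat) k i)
          = (fun k => (Bt * (Bhattauᵀ * S)) k i) - (fun k => (B * (Bhatᵀ * S)) k i)
            - (fun k => (Q * Matrix.diagonal lamhat) k i) := by
        funext k; simp
      rw [hsplit, hdiagcol, col_mul Bt (Bhattauᵀ * S) i, col_mul B (Bhatᵀ * S) i, hBS, hBTS]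
    rw [hM, Matrix.sub_mulVec, Matrix.smul_mulVec, Matrix.one_mulVec, hAc,
      Matrix.neg_mulVec]
    funext k
    simp only [Pi.add_apply, Pi.sub_apply, Pi.smul_apply, Pi.neg_apply, smul_eq_mul, neg_smul]
    ring
  have hMdet : IsUnit M.det := (Matrix.isUnit_iff_isUnit_det M).mp hi
  have hMinv : M⁻¹ * M = 1 := Matrix.nonsing_inv_mul M hMdet
  calc (fun k => Q k i) = (M⁻¹ * M) *ᵥ (fun k => Q k i) := by
        rw [hMinv, Matrix.one_mulVec]
    _ = M⁻¹ *ᵥ (M *ᵥ (fun k => Q k i)) := (Matrix.mulVec_mulVec _ _ _).symm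
    _ = _ := by rw [hcol]

/-- **Theorem 3, part 1.** For a reduced-order model with simple poles
(`Â = R̂ Λ̂ R̂⁻¹` diagonalizable), the gramian-based optimality condition (b3)
`C P̄τ = Ĉ P̂τ` of time-limited `H₂`-optimal model order reduction is equivalent to the
right tangential interpolation conditions
`G_T(−λ̂ᵢ) r̃ᵢ = Ĝ_T(−λ̂ᵢ) r̃ᵢ` for all `i`. -/
theorem time_limited_b3_iff_right_tangential_interpolation
    {n m p r : ℕ}
    (A : Matrix (Fin n) (Fin n) ℂ)
    (B : Matrix (Fin n) (Fin m) ℂ)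
    (C : Matrix (Fin p) (Fin n) ℂ)
    (τ : ℝ) (hτ : 0 < τ)
    (Rhat : Matrix (Fin r) (Fin r) ℂ) (hRhat : IsUnit Rhat)
    (lamhat : Fin r → ℂ)
    (Ahat : Matrix (Fin r) (Fin r) ℂ)
    (hAhat : Ahat = Rhat * Matrix.diagonal lamhat * Rhat⁻¹)
    (Bhat : Matrix (Fin r) (Fin m) ℂ)
    (Chat : Matrix (Fin p) (Fin r) ℂ)
    (hinvA : ∀ i : Fin r, IsUnit ((-lamhat i) • (1 : Matrix (Fin n) (Fin n) ℂ) - A))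
    (hinvAhat : ∀ i : Fin r, IsUnit ((-lamhat i) • (1 : Matrix (Fin r) (Fin r) ℂ) - Ahat))
    (Btau : Matrix (Fin n) (Fin m) ℂ) (hBtau : Btau = exp ((τ : ℂ) • A) * B)
    (Bhattau : Matrix (Fin r) (Fin m) ℂ) (hBhattau : Bhattau = exp ((τ : ℂ) • Ahat) * Bhat)
    (GT : ℂ → Matrix (Fin p) (Fin m ⊕ Fin m) ℂ)
    (hGT : ∀ s : ℂ, GT s =
      C * (s • (1 : Matrix (Fin n) (Fin n) ℂ) - A)⁻¹ * Matrix.fromCols B (-Btau))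
    (GThat : ℂ → Matrix (Fin p) (Fin m ⊕ Fin m) ℂ)
    (hGThat : ∀ s : ℂ, GThat s =
      Chat * (s • (1 : Matrix (Fin r) (Fin r) ℂ) - Ahat)⁻¹ * Matrix.fromCols Bhat (-Bhattau))
    (rhat : Fin r → Fin m → ℂ) (hrhat : ∀ i j, rhat i j = (Rhat⁻¹ * Bhat) i j)
    (rtilde : Fin r → (Fin m ⊕ Fin m) → ℂ)
    (hrtilde : ∀ i, rtilde i =
      Sum.elim (rhat i) (fun j => Complex.exp (lamhat i * τ) * rhat i j))
    (Pbartau : Matrix (Fin n) (Fin r) ℂ)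
    (hPbartau : A * Pbartau + Pbartau * Ahatᵀ + B * Bhatᵀ - Btau * Bhattauᵀ = 0)
    (Phattau : Matrix (Fin r) (Fin r) ℂ)
    (hPhattau : Ahat * Phattau + Phattau * Ahatᵀ + Bhat * Bhatᵀ - Bhattau * Bhattauᵀ = 0) :
    C * Pbartau = Chat * Phattau ↔
      ∀ i : Fin r, (GT (-lamhat i)).mulVec (rtilde i) = (GThat (-lamhat i)).mulVec (rtilde i) := by
  have hRdet : IsUnit Rhat.det := (Matrix.isUnit_iff_isUnit_det Rhat).mp hRhat
  have hinv1 : Rhat⁻¹ * Rhat = 1 := Matrix.nonsing_inv_mul Rhat hRdet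
  have hinv2 : Rhat * Rhat⁻¹ = 1 := Matrix.mul_nonsing_inv Rhat hRdet
  -- the exponential of `τ • Ahat`
  have hsmul : (τ : ℂ) • Ahat
      = Rhat * Matrix.diagonal (fun i => (τ : ℂ) • lamhat i) * Rhat⁻¹ := by
    have hd : Matrix.diagonal (fun i => (τ : ℂ) • lamhat i)
        = (τ : ℂ) • Matrix.diagonal lamhat := Matrix.diagonal_smul (τ : ℂ) lamhat
    rw [hAhat, hd, mul_smul_comm, smul_mul_assoc]
  have hexp : exp ((τ : ℂ) • Ahat)
      = Rhat * Matrix.diagonal (fun i => Complex.exp (lamhat i * τ)) * Rhat⁻¹ := by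
    rw [hsmul]
    have hu := Matrix.exp_units_conj hRhat.unit
      (Matrix.diagonal (fun i => (τ : ℂ) • lamhat i))
    rw [hRhat.unit_spec, Matrix.coe_units_inv, hRhat.unit_spec] at hu
    rw [hu, Matrix.exp_diagonal]
    congr 2
    funext j
    rw [Pi.exp_def]
    simp [← Complex.exp_eq_exp_ℂ, smul_eq_mul, mul_comm]
  have hBT : Rhat⁻¹ * Bhattau
      = Matrix.diagonal (fun i => Complex.exp (lamhat i * τ)) * (Rhat⁻¹ * Bhat) := by
    rw [hBhattau, hexp]
    simp only [← Matrix.mul_assoc]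
    rw [hinv1, Matrix.one_mul, Matrix.mul_assoc]
  -- column identities
  have hcolA : ∀ i : Fin r, GT (-lamhat i) *ᵥ rtilde i
      = fun k => (C * (Pbartau * Rhat⁻¹ᵀ)) k i := by
    intro i
    have hr1 : rhat i = fun j => (Rhat⁻¹ * Bhat) i j := funext (hrhat i)
    have hc : (fun k => (Pbartau * Rhat⁻¹ᵀ) k i)
        = ((-lamhat i) • (1 : Matrix (Fin n) (Fin n) ℂ) - A)⁻¹ *ᵥ
          (B *ᵥ rhat i
            + (-Btau) *ᵥ (fun j => Complex.exp (lamhat i * τ) * rhat i j)) := by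
      simp only [hr1]
      exact tl_col A B Btau Rhat hRhat lamhat (fun i => Complex.exp (lamhat i * τ))
        Ahat hAhat Bhat Bhattau hBT Pbartau hPbartau i (hinvA i)
    rw [hGT, hrtilde, col_mul C (Pbartau * Rhat⁻¹ᵀ) i, hc,
      ← Matrix.mulVec_mulVec, ← Matrix.mulVec_mulVec,
      Matrix.fromCols_mulVec_sumElim]
  have hcolB : ∀ i : Fin r, GThat (-lamhat i) *ᵥ rtilde i
      = fun k => (Chat * (Phattau * Rhat⁻¹ᵀ)) k i := by
    intro i
    have hr1 : rhat i = fun j => (Rhat⁻¹ * Bhat) i j := funext (hrhat i)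
    have hc : (fun k => (Phattau * Rhat⁻¹ᵀ) k i)
        = ((-lamhat i) • (1 : Matrix (Fin r) (Fin r) ℂ) - Ahat)⁻¹ *ᵥ
          (Bhat *ᵥ rhat i
            + (-Bhattau) *ᵥ (fun j => Complex.exp (lamhat i * τ) * rhat i j)) := by
      simp only [hr1]
      exact tl_col Ahat Bhat Bhattau Rhat hRhat lamhat (fun i => Complex.exp (lamhat i * τ))
        Ahat hAhat Bhat Bhattau hBT Phattau hPhattau i (hinvAhat i)
    rw [hGThat, hrtilde, col_mul Chat (Phattau * Rhat⁻¹ᵀ) i, hc,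
      ← Matrix.mulVec_mulVec, ← Matrix.mulVec_mulVec,
      Matrix.fromCols_mulVec_sumElim]
  have hST : Rhat⁻¹ᵀ * Rhatᵀ = 1 := by
    rw [← Matrix.transpose_mul, hinv2, Matrix.transpose_one]
  constructor
  · intro h i
    rw [hcolA i, hcolB i, ← Matrix.mul_assoc, ← Matrix.mul_assoc, h]
  · intro h
    have hQ : C * (Pbartau * Rhat⁻¹ᵀ) = Chat * (Phattau * Rhat⁻¹ᵀ) := by
      ext k i
      exact congrFun ((hcolA i).symm.trans ((h i).trans (hcolB i))) k
    calc C * Pbartau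
        = C * (Pbartau * Rhat⁻¹ᵀ) * Rhatᵀ := by
          rw [Matrix.mul_assoc, Matrix.mul_assoc, hST, Matrix.mul_one]
      _ = Chat * (Phattau * Rhat⁻¹ᵀ) * Rhatᵀ := by rw [hQ]
      _ = Chat * Phattau := by
          rw [Matrix.mul_assoc, Matrix.mul_assoc, hST, Matrix.mul_one]
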